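/- arXiv:1302.4660 — 2 statements merged into one kernel-verified Lean document; each statement's English description precedes it below -/
import Mathlib

section
/- (Theorem 1, measurement gain.) Assume μ1 = μ2 = 0 and (r1 + r2)/2 < r12, and set d = (2·r12 − r1 − r2)/4. Then lim_{σ² → 0+} P̄_err(σ²) / (σ²)^d = sqrt(P1·P2)·( 2^{−M}·v12 / sqrt(v1·v2) )^{−1/2}; equivalently, P̄_err(σ²) = (g_m/σ²)^{−d} + o((σ²)^d) as σ² → 0+, where the measurement gain g_m is defined by g_m^{−d} = sqrt(P1·P2)·( 2^{−M}·v12 / sqrt(v1·v2) )^{−1/2}. -/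
open Matrix MeasureTheory Filter Real Topology

noncomputable def pdet {n : ℕ} (A : Matrix (Fin n) (Fin n) ℝ) : ℝ :=
  if h : A.IsHermitian then
    ∏ i ∈ Finset.univ.filter (fun i => h.eigenvalues i ≠ 0), h.eigenvalues i
  else 0

noncomputable def Kb {M N : ℕ} (Φ : Matrix (Fin M) (Fin N) ℝ)
    (S1 S2 : Matrix (Fin N) (Fin N) ℝ) (μ1 μ2 : Fin N → ℝ) (s : ℝ) : ℝ :=
  1/8 * ((Φ *ᵥ (μ1 - μ2)) ⬝ᵥ
      (((1/2 : ℝ) • (Φ * (S1 + S2) * Φᵀ + s • (1 : Matrix (Fin M) (Fin M) ℝ)))⁻¹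
        *ᵥ (Φ *ᵥ (μ1 - μ2))))
  + 1/2 * Real.log
      (((1/2 : ℝ) • (Φ * (S1 + S2) * Φᵀ + s • (1 : Matrix (Fin M) (Fin M) ℝ))).det /
        Real.sqrt ((Φ * S1 * Φᵀ + s • (1 : Matrix (Fin M) (Fin M) ℝ)).det *
          (Φ * S2 * Φᵀ + s • (1 : Matrix (Fin M) (Fin M) ℝ)).det))

noncomputable def Perr {M N : ℕ} (Φ : Matrix (Fin M) (Fin N) ℝ)
    (S1 S2 : Matrix (Fin N) (Fin N) ℝ) (μ1 μ2 : Fin N → ℝ) (P1 P2 : ℝ) (s : ℝ) : ℝ :=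
  Real.sqrt (P1 * P2) * Real.exp (-(Kb Φ S1 S2 μ1 μ2 s))

lemma det_add_smul_one {n : ℕ} {A : Matrix (Fin n) (Fin n) ℝ} (hA : A.IsHermitian) (s : ℝ) :
    (A + s • (1 : Matrix (Fin n) (Fin n) ℝ)).det = ∏ i, (hA.eigenvalues i + s) := by
  have hU : (hA.eigenvectorUnitary : Matrix (Fin n) (Fin n) ℝ) *
      star (hA.eigenvectorUnitary : Matrix (Fin n) (Fin n) ℝ) = 1 :=
    (Matrix.mem_unitaryGroup_iff).mp hA.eigenvectorUnitary.2
  have h1 : A + s • 1 = (hA.eigenvectorUnitary : Matrix (Fin n) (Fin n) ℝ) *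
      (Matrix.diagonal (RCLike.ofReal ∘ hA.eigenvalues) + s • 1) *
      star (hA.eigenvectorUnitary : Matrix (Fin n) (Fin n) ℝ) := by
    rw [Matrix.mul_add, Matrix.add_mul]
    congr 1
    · exact hA.spectral_theorem
    · rw [Matrix.mul_smul, Matrix.mul_one, Matrix.smul_mul, hU]
  rw [h1, Matrix.det_mul, Matrix.det_mul, mul_right_comm, ← Matrix.det_mul, hU,
    Matrix.det_one, one_mul, RCLike.ofReal_real_eq_id]
  rw [Matrix.smul_one_eq_diagonal, Matrix.diagonal_add, Matrix.det_diagonal]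
  simp

lemma psd_det_asymp {n : ℕ} {A : Matrix (Fin n) (Fin n) ℝ} (hA : A.PosSemidef) :
    ∃ f : ℝ → ℝ, Continuous f ∧ (∀ s, 0 ≤ s → 0 < f s) ∧ f 0 = pdet A ∧
      ∀ s, (A + s • (1 : Matrix (Fin n) (Fin n) ℝ)).det = f s * s ^ (n - A.rank) := by
  classical
  set ε := hA.1.eigenvalues with hε
  refine ⟨fun s => ∏ i ∈ Finset.univ.filter (fun i => ε i ≠ 0), (ε i + s), ?_, ?_, ?_, ?_⟩
  · exact continuous_finset_prod _ (fun i _ => by continuity)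
  · intro s hs
    exact Finset.prod_pos fun i hi => add_pos_of_pos_of_nonneg
      (lt_of_le_of_ne (hA.eigenvalues_nonneg i) (Ne.symm (Finset.mem_filter.mp hi).2)) hs
  · rw [pdet, dif_pos hA.1]
    simp
    exact Finset.prod_congr (by ext; simp [hε]) (fun _ _ => rfl)
  · intro s
    have hcard : (Finset.univ.filter (fun i => ¬ ε i ≠ 0)).card = n - A.rank := by
      have h1 : (Finset.univ.filter (fun i => ε i ≠ 0)).card = A.rank := by
        rw [hA.1.rank_eq_card_non_zero_eigs, Fintype.card_subtype]
      have h2 := Finset.card_filter_add_card_filter_not (s := (Finset.univ : Finset (Fin n)))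
        (p := fun i => ε i ≠ 0)
      simp only [Finset.card_univ, Fintype.card_fin] at h2
      omega
    rw [det_add_smul_one hA.1 s,
      ← Finset.prod_filter_mul_prod_filter_not Finset.univ (fun i => ε i ≠ 0)]
    congr 1
    rw [← hcard]
    rw [Finset.prod_congr rfl (fun i hi => ?_), Finset.prod_const]
    simp only [Finset.mem_filter, not_not] at hi
    rw [show hA.1.eigenvalues i = ε i from rfl, hi.2, zero_add]

set_option maxHeartbeats 1000000 in
/-- Theorem 1, measurement gain: with zero-mean classes, if
`(r1 + r2)/2 < r12` and `d = (2 r12 - r1 - r2)/4`, then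
`lim_{σ²→0⁺} P̄_err(σ²) / (σ²)^d = sqrt(P1 P2) (2^{-M} v12 / sqrt(v1 v2))^{-1/2}`,
i.e. `P̄_err(σ²) = (g_m/σ²)^{-d} + o((σ²)^d)` where the measurement gain `g_m`
is defined by `g_m^{-d} = sqrt(P1 P2) (2^{-M} v12 / sqrt(v1 v2))^{-1/2}`. -/
theorem theorem1_measurement_gain (M N : ℕ) (hM : 0 < M) (hN : 0 < N)
    (Φ : Matrix (Fin M) (Fin N) ℝ) (S1 S2 : Matrix (Fin N) (Fin N) ℝ)
    (hS1 : S1.PosSemidef) (hS2 : S2.PosSemidef) (μ1 μ2 : Fin N → ℝ)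
    (hμ1 : μ1 = 0) (hμ2 : μ2 = 0)
    (P1 P2 : ℝ) (hP1 : 0 < P1) (hP2 : 0 < P2) (hP : P1 + P2 = 1)
    (hrank : (Φ * S1 * Φᵀ).rank + (Φ * S2 * Φᵀ).rank < 2 * (Φ * (S1 + S2) * Φᵀ).rank)
    (d : ℝ)
    (hd : d = (2 * ((Φ * (S1 + S2) * Φᵀ).rank : ℝ) - ((Φ * S1 * Φᵀ).rank : ℝ)
      - ((Φ * S2 * Φᵀ).rank : ℝ)) / 4) :
    Filter.Tendsto (fun s : ℝ => Perr Φ S1 S2 μ1 μ2 P1 P2 s / s ^ d) (𝓝[>] 0)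
      (𝓝 (Real.sqrt (P1 * P2) *
        ((2:ℝ) ^ (-(M:ℝ)) * pdet (Φ * (S1 + S2) * Φᵀ) /
          Real.sqrt (pdet (Φ * S1 * Φᵀ) * pdet (Φ * S2 * Φᵀ))) ^ (-(1:ℝ)/2))) := by
  have hps1 : (Φ * S1 * Φᵀ).PosSemidef := by
    have := hS1.mul_mul_conjTranspose_same Φ
    rwa [conjTranspose_eq_transpose_of_trivial] at this
  have hps2 : (Φ * S2 * Φᵀ).PosSemidef := by
    have := hS2.mul_mul_conjTranspose_same Φ
    rwa [conjTranspose_eq_transpose_of_trivial] at this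
  have hps12 : (Φ * (S1 + S2) * Φᵀ).PosSemidef := by
    have := (hS1.add hS2).mul_mul_conjTranspose_same Φ
    rwa [conjTranspose_eq_transpose_of_trivial] at this
  obtain ⟨f1, hf1c, hf1pos, hf10, hf1det⟩ := psd_det_asymp hps1
  obtain ⟨f2, hf2c, hf2pos, hf20, hf2det⟩ := psd_det_asymp hps2
  obtain ⟨f12, hf12c, hf12pos, hf120, hf12det⟩ := psd_det_asymp hps12
  set r1 := (Φ * S1 * Φᵀ).rank with hr1
  set r2 := (Φ * S2 * Φᵀ).rank with hr2
  set r12 := (Φ * (S1 + S2) * Φᵀ).rank with hr12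
  have hr1M : r1 ≤ M := Matrix.rank_le_height _
  have hr2M : r2 ≤ M := Matrix.rank_le_height _
  have hr12M : r12 ≤ M := Matrix.rank_le_height _
  set G : ℝ → ℝ := fun s => (1/2 : ℝ)^M * f12 s / Real.sqrt (f1 s * f2 s) with hG
  have hGpos : ∀ s, 0 ≤ s → 0 < G s := fun s hs =>
    div_pos (mul_pos (by positivity) (hf12pos s hs))
      (Real.sqrt_pos.mpr (mul_pos (hf1pos s hs) (hf2pos s hs)))
  have key : ∀ s ∈ Set.Ioi (0:ℝ), Perr Φ S1 S2 μ1 μ2 P1 P2 s / s ^ d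
      = Real.sqrt (P1 * P2) * Real.exp (-(1/2 * Real.log (G s))) := by
    intro s hs
    rw [Set.mem_Ioi] at hs
    have hf1p := hf1pos s hs.le
    have hf2p := hf2pos s hs.le
    have hf12p := hf12pos s hs.le
    have hsp1 : (0:ℝ) < s ^ (M - r1) := pow_pos hs _
    have hsp2 : (0:ℝ) < s ^ (M - r2) := pow_pos hs _
    have hsp12 : (0:ℝ) < s ^ (M - r12) := pow_pos hs _
    have e12 : ((1/2 : ℝ) • (Φ * (S1 + S2) * Φᵀ + s • (1 : Matrix (Fin M) (Fin M) ℝ))).det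
        = (1/2:ℝ)^M * (f12 s * s ^ (M - r12)) := by
      rw [Matrix.det_smul, hf12det s, Fintype.card_fin]
    rw [Perr, Kb, hμ1, hμ2, sub_self, Matrix.mulVec_zero, zero_dotProduct,
      e12, hf1det s, hf2det s, Real.rpow_def_of_pos hs, mul_div_assoc, ← Real.exp_sub]
    congr 1
    have hlogQ : Real.log ((1/2:ℝ)^M * (f12 s * s ^ (M - r12)) /
        Real.sqrt (f1 s * s ^ (M - r1) * (f2 s * s ^ (M - r2))))
        = (Real.log ((1/2:ℝ)^M) + (Real.log (f12 s) + (M - r12 : ℕ) * Real.log s))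
          - (Real.log (f1 s) + (M - r1 : ℕ) * Real.log s
            + (Real.log (f2 s) + (M - r2 : ℕ) * Real.log s)) / 2 := by
      rw [Real.log_div (by positivity) (by positivity), Real.log_sqrt (by positivity),
        Real.log_mul (by positivity) (by positivity),
        Real.log_mul (by positivity) (by positivity),
        Real.log_mul (by positivity) (by positivity),
        Real.log_mul (by positivity) (by positivity),
        Real.log_pow, Real.log_pow, Real.log_pow,
        Real.log_mul (by positivity) (by positivity), Real.log_pow]
    have hlogG : Real.log (G s)
        = Real.log ((1/2:ℝ)^M) + Real.log (f12 s)
          - (Real.log (f1 s) + Real.log (f2 s)) / 2 := by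
      rw [hG]
      rw [Real.log_div (by positivity) (by positivity), Real.log_sqrt (by positivity),
        Real.log_mul (by positivity) (by positivity),
        Real.log_mul (by positivity) (by positivity)]
    rw [hlogQ, hlogG, hd, Nat.cast_sub hr1M, Nat.cast_sub hr2M, Nat.cast_sub hr12M]
    ring
  have hEv : (fun s : ℝ => Perr Φ S1 S2 μ1 μ2 P1 P2 s / s ^ d) =ᶠ[𝓝[>] (0:ℝ)]
      (fun s => Real.sqrt (P1 * P2) * Real.exp (-(1/2 * Real.log (G s)))) :=
    eventually_nhdsWithin_of_forall key
  have hcont : ContinuousAt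
      (fun s => Real.sqrt (P1 * P2) * Real.exp (-(1/2 * Real.log (G s)))) 0 := by
    have hGc : ContinuousAt G 0 := by
      apply ContinuousAt.div
      · exact (continuous_const.mul hf12c).continuousAt
      · exact (Real.continuous_sqrt.comp (hf1c.mul hf2c)).continuousAt
      · exact ne_of_gt (Real.sqrt_pos.mpr (mul_pos (hf1pos 0 le_rfl) (hf2pos 0 le_rfl)))
    exact continuousAt_const.mul (Real.continuous_exp.continuousAt.comp
      ((continuousAt_const.mul ((Real.continuousAt_log (ne_of_gt (hGpos 0 le_rfl))).comp hGc)).neg))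
  have hval : Real.sqrt (P1 * P2) * Real.exp (-(1/2 * Real.log (G 0))) = Real.sqrt (P1 * P2) *
      ((2:ℝ) ^ (-(M:ℝ)) * pdet (Φ * (S1 + S2) * Φᵀ) /
        Real.sqrt (pdet (Φ * S1 * Φᵀ) * pdet (Φ * S2 * Φᵀ))) ^ (-(1:ℝ)/2) := by
    have hbase : (2:ℝ) ^ (-(M:ℝ)) * pdet (Φ * (S1 + S2) * Φᵀ) /
        Real.sqrt (pdet (Φ * S1 * Φᵀ) * pdet (Φ * S2 * Φᵀ)) = G 0 := by
      rw [hG]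
      simp only [← hf10, ← hf20, ← hf120]
      congr 2
      rw [Real.rpow_neg (by norm_num), Real.rpow_natCast, one_div, inv_pow]
    rw [hbase, Real.rpow_def_of_pos (hGpos 0 le_rfl),
      show -(1/2 * Real.log (G 0)) = Real.log (G 0) * (-(1:ℝ)/2) by ring]
  have hlim : Filter.Tendsto
      (fun s => Real.sqrt (P1 * P2) * Real.exp (-(1/2 * Real.log (G s)))) (𝓝[>] (0:ℝ))
      (𝓝 (Real.sqrt (P1 * P2) * Real.exp (-(1/2 * Real.log (G 0))))) :=
    hcont.tendsto.mono_left nhdsWithin_le_nhds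
  rw [hval] at hlim
  exact hlim.congr' hEv.symm
end

section
/- (Theorem 2, case ρ12 ≤ M with strict rank inequality; saturation of the diversity order.) Assume μ1 = μ2 = 0, let ρ1 = rank(Σ1), ρ2 = rank(Σ2), ρ12 = rank(Σ1 + Σ2), assume ρ1 ≤ ρ2 ≤ ρ12, and assume the rank relations r1 = min(M, ρ1), r2 = min(M, ρ2), r12 = min(M, ρ12). If ρ12 ≤ M and ρ1 + ρ2 < 2·ρ12, then lim_{σ² → 0+} log P̄_err(σ²) / log σ² = (2·ρ12 − ρ1 − ρ2)/4; in particular this diversity order does not depend on M, so increasing the number of measurements beyond ρ12 does not increase the diversity order. -/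
open Matrix MeasureTheory Filter Real Topology

lemma aux_det_add_smul_one {m : ℕ} {A : Matrix (Fin m) (Fin m) ℝ} (hA : A.IsHermitian) (s : ℝ) :
    (A + s • (1 : Matrix (Fin m) (Fin m) ℝ)).det = ∏ i, (hA.eigenvalues i + s) := by
  have hu : (hA.eigenvectorUnitary : Matrix (Fin m) (Fin m) ℝ) *
      star (hA.eigenvectorUnitary : Matrix (Fin m) (Fin m) ℝ) = 1 :=
    (Matrix.mem_unitaryGroup_iff).mp hA.eigenvectorUnitary.2
  have hd : Matrix.diagonal (fun i => hA.eigenvalues i + s)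
      = Matrix.diagonal (RCLike.ofReal ∘ hA.eigenvalues) +
        s • (1 : Matrix (Fin m) (Fin m) ℝ) := by
    rw [Matrix.smul_one_eq_diagonal, Matrix.diagonal_add]
    simp [RCLike.ofReal_real_eq_id, Function.comp]
  have h1 : A + s • (1 : Matrix (Fin m) (Fin m) ℝ) =
      (hA.eigenvectorUnitary : Matrix (Fin m) (Fin m) ℝ) *
        (Matrix.diagonal (fun i => hA.eigenvalues i + s)) *
        star (hA.eigenvectorUnitary : Matrix (Fin m) (Fin m) ℝ) := by
    rw [hd, Matrix.mul_add, Matrix.add_mul, Matrix.mul_smul, Matrix.smul_mul, Matrix.mul_one, hu,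
      ← Unitary.conjStarAlgAut_apply (S := ℝ), ← hA.spectral_theorem]
  rw [h1, Matrix.det_mul_right_comm, hu, Matrix.one_mul, Matrix.det_diagonal]

lemma aux_card_zero_eigs {m : ℕ} {A : Matrix (Fin m) (Fin m) ℝ} (hA : A.IsHermitian) :
    (Finset.univ.filter (fun i => hA.eigenvalues i = 0)).card = m - A.rank := by
  have h1 : A.rank = (Finset.univ.filter (fun i => hA.eigenvalues i ≠ 0)).card := by
    rw [hA.rank_eq_card_non_zero_eigs, Fintype.card_subtype]
  have h2 := Finset.card_filter_add_card_filter_not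
    (s := (Finset.univ : Finset (Fin m))) (p := fun i => hA.eigenvalues i = 0)
  simp only [ne_eq] at h1 h2 ⊢
  rw [Finset.card_univ, Fintype.card_fin] at h2
  omega

lemma aux_det_pos {m : ℕ} {A : Matrix (Fin m) (Fin m) ℝ} (hA : A.PosSemidef) {s : ℝ}
    (hs : 0 < s) : 0 < (A + s • (1 : Matrix (Fin m) (Fin m) ℝ)).det := by
  rw [aux_det_add_smul_one hA.1]
  exact Finset.prod_pos fun i _ => add_pos_of_nonneg_of_pos (hA.eigenvalues_nonneg i) hs

lemma aux_log_det {m : ℕ} {A : Matrix (Fin m) (Fin m) ℝ} (hA : A.PosSemidef) {s : ℝ}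
    (hs : 0 < s) :
    Real.log (A + s • (1 : Matrix (Fin m) (Fin m) ℝ)).det =
      ((m : ℝ) - A.rank) * Real.log s +
      ∑ i ∈ Finset.univ.filter (fun i => hA.1.eigenvalues i ≠ 0),
        Real.log (hA.1.eigenvalues i + s) := by
  rw [aux_det_add_smul_one hA.1,
    Real.log_prod (fun i _ =>
      (add_pos_of_nonneg_of_pos (hA.eigenvalues_nonneg i) hs).ne'),
    ← Finset.sum_filter_add_sum_filter_not Finset.univ (fun i => hA.1.eigenvalues i = 0)]
  congr 1
  have hcongr : ∀ i ∈ Finset.univ.filter (fun i => hA.1.eigenvalues i = 0),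
      Real.log (hA.1.eigenvalues i + s) = Real.log s := by
    intro i hi
    rw [(Finset.mem_filter.mp hi).2, zero_add]
  rw [Finset.sum_congr rfl hcongr, Finset.sum_const, nsmul_eq_mul, aux_card_zero_eigs hA.1,
    Nat.cast_sub A.rank_le_height]

open Matrix MeasureTheory Filter Real Topology

/-- Theorem 2, case ρ12 ≤ M with ρ1 + ρ2 < 2ρ12: the diversity order is (2ρ12 - ρ1 - ρ2)/4, independent of M. -/
theorem theorem2_case_rho12_le_M (M N : ℕ) (hM : 0 < M) (hN : 0 < N)
    (Φ : Matrix (Fin M) (Fin N) ℝ) (S1 S2 : Matrix (Fin N) (Fin N) ℝ)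
    (hS1 : S1.PosSemidef) (hS2 : S2.PosSemidef) (μ1 μ2 : Fin N → ℝ)
    (hμ1 : μ1 = 0) (hμ2 : μ2 = 0)
    (P1 P2 : ℝ) (hP1 : 0 < P1) (hP2 : 0 < P2) (hP : P1 + P2 = 1)
    (hρa : S1.rank ≤ S2.rank) (hρb : S2.rank ≤ (S1 + S2).rank)
    (hr1 : (Φ * S1 * Φᵀ).rank = min M S1.rank)
    (hr2 : (Φ * S2 * Φᵀ).rank = min M S2.rank)
    (hr12 : (Φ * (S1 + S2) * Φᵀ).rank = min M (S1 + S2).rank)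
    (hcase1 : (S1 + S2).rank ≤ M) (hcase2 : S1.rank + S2.rank < 2 * (S1 + S2).rank) :
    Filter.Tendsto
      (fun s : ℝ => Real.log (Perr Φ S1 S2 μ1 μ2 P1 P2 s) / Real.log s) (𝓝[>] 0)
      (𝓝 ((2 * ((S1 + S2).rank : ℝ) - (S1.rank : ℝ) - (S2.rank : ℝ)) / 4)) := by

  classical
  subst hμ1 hμ2
  have hA1 : (Φ * S1 * Φᵀ).PosSemidef := by
    simpa using
      hS1.mul_mul_conjTranspose_same Φ
  have hA2 : (Φ * S2 * Φᵀ).PosSemidef := by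
    simpa using hS2.mul_mul_conjTranspose_same Φ
  have hA12 : (Φ * (S1 + S2) * Φᵀ).PosSemidef := by
    simpa using (hS1.add hS2).mul_mul_conjTranspose_same Φ
  have hρ12M : (S1 + S2).rank ≤ M := hcase1
  have hρ2M : S2.rank ≤ M := le_trans hρb hρ12M
  have hρ1M : S1.rank ≤ M := le_trans hρa hρ2M
  have e1 : (Φ * S1 * Φᵀ).rank = S1.rank := by rw [hr1, min_eq_right hρ1M]
  have e2 : (Φ * S2 * Φᵀ).rank = S2.rank := by rw [hr2, min_eq_right hρ2M]
  have e12 : (Φ * (S1 + S2) * Φᵀ).rank = (S1 + S2).rank := by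
    rw [hr12, min_eq_right hρ12M]
  set κ : ℝ := (2 * ((S1 + S2).rank : ℝ) - (S1.rank : ℝ) - (S2.rank : ℝ)) / 4 with hκdef
  set f1 : ℝ → ℝ := fun s =>
    ∑ i ∈ Finset.univ.filter (fun i => hA1.1.eigenvalues i ≠ 0),
      Real.log (hA1.1.eigenvalues i + s) with hf1def
  set f2 : ℝ → ℝ := fun s =>
    ∑ i ∈ Finset.univ.filter (fun i => hA2.1.eigenvalues i ≠ 0),
      Real.log (hA2.1.eigenvalues i + s) with hf2def
  set f12 : ℝ → ℝ := fun s =>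
    ∑ i ∈ Finset.univ.filter (fun i => hA12.1.eigenvalues i ≠ 0),
      Real.log (hA12.1.eigenvalues i + s) with hf12def
  set H : ℝ → ℝ := fun s => (1/4) * f1 s + (1/4) * f2 s - (1/2) * f12 s with hHdef
  set C : ℝ := Real.log (Real.sqrt (P1 * P2)) - (1/2) * ((M : ℝ) * Real.log (1/2)) with hCdef
  have hsq : (0 : ℝ) < Real.sqrt (P1 * P2) := Real.sqrt_pos.mpr (mul_pos hP1 hP2)
  have key : ∀ s : ℝ, 0 < s →
      Real.log (Perr Φ S1 S2 0 0 P1 P2 s) = κ * Real.log s + (C + H s) := by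
    intro s hs
    have hd1 := aux_det_pos hA1 hs
    have hd2 := aux_det_pos hA2 hs
    have hd12 := aux_det_pos hA12 hs
    have hsqd : (0:ℝ) < Real.sqrt ((Φ * S1 * Φᵀ + s • (1 : Matrix (Fin M) (Fin M) ℝ)).det *
        (Φ * S2 * Φᵀ + s • (1 : Matrix (Fin M) (Fin M) ℝ)).det) :=
      Real.sqrt_pos.mpr (mul_pos hd1 hd2)
    have hpow : (0:ℝ) < (1/2 : ℝ) ^ (Fintype.card (Fin M)) := by positivity
    rw [Perr, Real.log_mul hsq.ne' (Real.exp_ne_zero _), Real.log_exp, Kb]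
    rw [sub_self, Matrix.mulVec_zero, zero_dotProduct, mul_zero, zero_add]
    rw [Matrix.det_smul]
    rw [Real.log_div (mul_pos hpow hd12).ne' hsqd.ne',
      Real.log_mul hpow.ne' hd12.ne', Real.log_pow,
      Real.log_sqrt (mul_pos hd1 hd2).le, Real.log_mul hd1.ne' hd2.ne']
    rw [aux_log_det hA1 hs, aux_log_det hA2 hs, aux_log_det hA12 hs]
    rw [e1, e2, e12]
    simp only [Fintype.card_fin, hHdef, hCdef, hκdef, hf1def, hf2def, hf12def]
    ring
  have hlogi : Tendsto (fun s : ℝ => (Real.log s)⁻¹) (𝓝[>] (0:ℝ)) (𝓝 0) := by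
    have h1 : Tendsto (fun s : ℝ => -Real.log s) (𝓝[>] (0:ℝ)) atTop :=
      tendsto_neg_atBot_atTop.comp Real.tendsto_log_nhdsGT_zero
    have h2 : Tendsto (fun s : ℝ => (-Real.log s)⁻¹) (𝓝[>] (0:ℝ)) (𝓝 0) :=
      tendsto_inv_atTop_zero.comp h1
    have h3 := h2.neg
    rw [neg_zero] at h3
    refine h3.congr fun s => ?_
    rw [inv_neg, neg_neg]
  have htend : ∀ (A : Matrix (Fin M) (Fin M) ℝ) (hA : A.PosSemidef),
      Tendsto (fun s : ℝ => ∑ i ∈ Finset.univ.filter (fun i => hA.1.eigenvalues i ≠ 0),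
        Real.log (hA.1.eigenvalues i + s)) (𝓝[>] (0:ℝ))
        (𝓝 (∑ i ∈ Finset.univ.filter (fun i => hA.1.eigenvalues i ≠ 0),
          Real.log (hA.1.eigenvalues i))) := by
    intro A hA
    refine tendsto_finset_sum _ fun i hi => ?_
    have hne : hA.1.eigenvalues i ≠ 0 := (Finset.mem_filter.mp hi).2
    have hc : ContinuousAt (fun s : ℝ => Real.log (hA.1.eigenvalues i + s)) 0 := by
      have := (Real.continuousAt_log (x := hA.1.eigenvalues i + 0) (by simpa using hne)).comp
        ((continuous_const.add continuous_id).continuousAt (x := (0:ℝ)))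
      exact this
    have h := hc.tendsto.mono_left (nhdsWithin_le_nhds (s := Set.Ioi (0:ℝ)))
    simpa using h
  have hHt : Tendsto H (𝓝[>] (0:ℝ)) (𝓝 (H 0)) := by
    have h1 := htend _ hA1
    have h2 := htend _ hA2
    have h12 := htend _ hA12
    simp only [hHdef, hf1def, hf2def, hf12def]
    refine Tendsto.sub (Tendsto.add ?_ ?_) ?_
    · simpa [add_zero] using (tendsto_const_nhds.mul h1)
    · simpa [add_zero] using (tendsto_const_nhds.mul h2)
    · simpa [add_zero] using (tendsto_const_nhds.mul h12)
  have hmain : Tendsto (fun s : ℝ => κ + (C + H s) * (Real.log s)⁻¹) (𝓝[>] (0:ℝ)) (𝓝 κ) := by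
    have := ((tendsto_const_nhds (x := C)).add hHt).mul hlogi
    rw [mul_zero] at this
    simpa using (tendsto_const_nhds (x := κ)).add this
  refine hmain.congr' ?_
  filter_upwards [Ioo_mem_nhdsGT_of_mem (Set.mem_Ico.mpr ⟨le_refl (0:ℝ), one_pos⟩)] with s hs
  have hlogne : Real.log s ≠ 0 := (Real.log_neg hs.1 hs.2).ne
  rw [key s hs.1]
  field_simp
end
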